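/- Let c > 0 and let ε be a real random variable with E[|ε|] < ∞. For any fixed real e with e ≠ 0, E[|L_RQF(e + ε) − L_RQF(e)|] / L_RQF(e) ≤ E[|(e+ε)² − e²|] / e² whenever the right-hand side is finite, where L_RQF(t) = t²/(t² + c). That is, the expected relative noise effect on RQF is at most that on MSE for any noise distribution. -/

import Mathlib

open MeasureTheory

theorem rqf_expected_relative_noise_effect_le_mse
    {Ω : Type*} [MeasurableSpace Ω] (μ : Measure Ω) [IsProbabilityMeasure μ]
    (c e : ℝ) (hc : 0 < c) (he : e ≠ 0) (ε : Ω → ℝ)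
    (hεint : Integrable ε μ)
    (hmse : Integrable (fun ω => |(e + ε ω) ^ 2 - e ^ 2|) μ) :
    (∫ ω, |(e + ε ω) ^ 2 / ((e + ε ω) ^ 2 + c) - e ^ 2 / (e ^ 2 + c)| ∂μ) /
        (e ^ 2 / (e ^ 2 + c)) ≤
      (∫ ω, |(e + ε ω) ^ 2 - e ^ 2| ∂μ) / e ^ 2 := by
  have he2 : (0:ℝ) < e ^ 2 := by positivity
  have hbc : (0:ℝ) < e ^ 2 + c := by positivity
  set L : ℝ := e ^ 2 / (e ^ 2 + c) with hL
  have hLpos : 0 < L := by positivity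
  -- pointwise bound
  have key : ∀ t : ℝ, |t ^ 2 / (t ^ 2 + c) - L| ≤ L / e ^ 2 * |t ^ 2 - e ^ 2| := by
    intro t
    have hac : (0:ℝ) < t ^ 2 + c := by positivity
    have heq : t ^ 2 / (t ^ 2 + c) - L = c * (t ^ 2 - e ^ 2) / ((t ^ 2 + c) * (e ^ 2 + c)) := by
      rw [hL]; field_simp; ring
    rw [heq, abs_div, abs_mul, abs_of_pos hc,
      abs_of_pos (mul_pos hac hbc)]
    rw [div_le_iff₀ (mul_pos hac hbc)]
    have hLe : L / e ^ 2 = 1 / (e ^ 2 + c) := by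
      rw [hL]; field_simp
    rw [hLe]
    have : 1 / (e ^ 2 + c) * |t ^ 2 - e ^ 2| * ((t ^ 2 + c) * (e ^ 2 + c))
        = |t ^ 2 - e ^ 2| * (t ^ 2 + c) := by
      field_simp
    rw [this]
    have : c * |t ^ 2 - e ^ 2| ≤ (t ^ 2 + c) * |t ^ 2 - e ^ 2| := by
      apply mul_le_mul_of_nonneg_right _ (abs_nonneg _)
      nlinarith [sq_nonneg t]
    linarith [this]
  -- integrability of LHS integrand
  have hmeas : AEStronglyMeasurable
      (fun ω => |(e + ε ω) ^ 2 / ((e + ε ω) ^ 2 + c) - L|) μ := by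
    have hε := hεint.aemeasurable
    have h1 : AEMeasurable (fun ω => (e + ε ω) ^ 2) μ := by
      have h0 : AEMeasurable (fun ω => e + ε ω) μ := aemeasurable_const.add hε
      exact h0.pow_const 2
    have h2 : AEMeasurable (fun ω => (e + ε ω) ^ 2 / ((e + ε ω) ^ 2 + c) - L) μ :=
      (h1.div (h1.add (aemeasurable_const (b := c)))).sub (aemeasurable_const (b := L))
    exact (measurable_abs.comp_aemeasurable h2).aestronglyMeasurable
  have hgint : Integrable (fun ω => L / e ^ 2 * |(e + ε ω) ^ 2 - e ^ 2|) μ :=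
    hmse.const_mul _
  have hfint : Integrable (fun ω => |(e + ε ω) ^ 2 / ((e + ε ω) ^ 2 + c) - L|) μ := by
    refine hgint.mono hmeas (Filter.Eventually.of_forall fun ω => ?_)
    rw [Real.norm_eq_abs, Real.norm_eq_abs, abs_abs]
    rw [abs_of_nonneg (by positivity : (0:ℝ) ≤ L / e ^ 2 * |(e + ε ω) ^ 2 - e ^ 2|)]
    exact key _
  have hintle : (∫ ω, |(e + ε ω) ^ 2 / ((e + ε ω) ^ 2 + c) - L| ∂μ)
      ≤ L / e ^ 2 * ∫ ω, |(e + ε ω) ^ 2 - e ^ 2| ∂μ := by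
    rw [← integral_const_mul]
    exact integral_mono hfint hgint fun ω => key _
  rw [div_le_div_iff₀ hLpos he2]
  calc (∫ ω, |(e + ε ω) ^ 2 / ((e + ε ω) ^ 2 + c) - L| ∂μ) * e ^ 2
      ≤ (L / e ^ 2 * ∫ ω, |(e + ε ω) ^ 2 - e ^ 2| ∂μ) * e ^ 2 := by
        exact mul_le_mul_of_nonneg_right hintle he2.le
    _ = (∫ ω, |(e + ε ω) ^ 2 - e ^ 2| ∂μ) * L := by
        field_simp
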